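/- For N ≥ 2, any N-partite correlation of the form P(a|x) = Σ_{k=1}^N q_k · P_k(a_{∖k}|x_{∖k}) · P_{k,x_{∖k},a_{∖k}}(a_k|x_k), with q_k ≥ 0, Σ_k q_k = 1, where each P_k(a_{∖k}|x_{∖k}) is a causal (N−1)-partite correlation and where, for each (k, x_{∖k}, a_{∖k}), P_{k,x_{∖k},a_{∖k}}(a_k|x_k) is a single-party probability distribution, is causal. (In each term of the sum, party k acts 'last'.) -/

import Mathlib

/-- A correlation for the parties in the finite set `S`, where party `i` has input set `X i`
and output set `A i`: a real number `P x a` for each assignment of inputs `x` and outputs `a`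
for the parties in `S`. -/
def Corr {ι : Type} (X A : ι → Type) (S : Finset ι) : Type :=
  ((i : {j // j ∈ S}) → X i.1) → ((i : {j // j ∈ S}) → A i.1) → ℝ

/-- `p` is a probability distribution on the finite type `α`. -/
def IsProbDist {α : Type} [Fintype α] (p : α → ℝ) : Prop :=
  (∀ a, 0 ≤ p a) ∧ ∑ a, p a = 1

/-- Restriction of a tuple indexed by `S` to a subset `T ⊆ S`. -/
def restr {ι : Type} {X : ι → Type} {S T : Finset ι} (h : T ⊆ S)
    (x : (i : {j // j ∈ S}) → X i.1) : (i : {j // j ∈ T}) → X i.1 :=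
  fun i => x ⟨i.1, h i.2⟩

theorem erase_sub {ι : Type} [DecidableEq ι] (S : Finset ι) (k : ι) : S.erase k ⊆ S :=
  fun _ hi => Finset.mem_of_mem_erase hi

theorem sdiff_sub {ι : Type} [DecidableEq ι] (S K : Finset ι) : S \ K ⊆ S :=
  fun _ hi => (Finset.mem_sdiff.mp hi).1

/-- Combine a tuple on `K` and a tuple on `S \ K` into a tuple on `S`. -/
def glue {ι : Type} [DecidableEq ι] {X : ι → Type} {S K : Finset ι} (_ : K ⊆ S)
    (u : (i : {j // j ∈ K}) → X i.1) (v : (i : {j // j ∈ S \ K}) → X i.1) :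
    (i : {j // j ∈ S}) → X i.1 :=
  fun i => if h : i.1 ∈ K then u ⟨i.1, h⟩ else v ⟨i.1, Finset.mem_sdiff.mpr ⟨i.2, h⟩⟩

/-- Insert a value for party `k` into a tuple on `S.erase k`, giving a tuple on `S`. -/
def ins {ι : Type} [DecidableEq ι] {X : ι → Type} {S : Finset ι} {k : ι} (_ : k ∈ S)
    (xk : X k) (u : (i : {j // j ∈ S.erase k}) → X i.1) : (i : {j // j ∈ S}) → X i.1 :=
  fun i => if h : i.1 = k then cast (congrArg X h.symm) xk
    else u ⟨i.1, Finset.mem_erase.mpr ⟨h, i.2⟩⟩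

/-- Causal correlations, defined by induction on the number of parties: any single-party
probability distribution is causal; a correlation on a set `S` of at least two parties is
causal iff it is a convex combination, over choices of a party `k ∈ S` acting first, of
products of a single-party distribution for `k` with causal correlations for the remaining
parties `S.erase k` that may depend on the input and output of party `k`. -/
inductive IsCausal {ι : Type} [DecidableEq ι] (X A : ι → Type) [∀ i, Fintype (A i)] :
    (S : Finset ι) → Corr X A S → Prop
  | base (k : ι) (P : Corr X A {k}) (hP : ∀ x, IsProbDist (P x)) : IsCausal X A {k} P
  | step (S : Finset ι) (hS : 2 ≤ S.card) (P : Corr X A S)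
      (q : {j // j ∈ S} → ℝ)
      (Pfirst : (k : {j // j ∈ S}) → X k.1 → A k.1 → ℝ)
      (Prest : (k : {j // j ∈ S}) → X k.1 → A k.1 → Corr X A (S.erase k.1))
      (hq : ∀ k, 0 ≤ q k)
      (hq1 : ∑ k ∈ S.attach, q k = 1)
      (hPfirst : ∀ k xk, IsProbDist (Pfirst k xk))
      (hPrest : ∀ k xk ak, IsCausal X A (S.erase k.1) (Prest k xk ak))
      (hP : ∀ x a, P x a = ∑ k ∈ S.attach, q k * Pfirst k (x k) (a k) *
            Prest k (x k) (a k) (restr (erase_sub S k.1) x) (restr (erase_sub S k.1) a)) :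
      IsCausal X A S P

set_option linter.unusedSectionVars false
section Helpers

variable {ι : Type} [DecidableEq ι]

/-- Tuple on a singleton set from a single value. -/
def singTup {Y : ι → Type} {T : Finset ι} {j : ι} (hT : T = {j}) (y : Y j) :
    (i : {l // l ∈ T}) → Y i.1 :=
  fun i => cast (congrArg Y (Finset.mem_singleton.mp (hT ▸ i.2)).symm) y

lemma singTup_restr {Y : ι → Type} {S T : Finset ι} {j : ι} (hT : T = {j}) (hTS : T ⊆ S)
    (x : (i : {l // l ∈ S}) → Y i.1) (hjS : j ∈ S) :
    singTup hT (x ⟨j, hjS⟩) = restr hTS x := by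
  funext i
  obtain ⟨iv, hiv⟩ := i
  have hj : iv = j := Finset.mem_singleton.mp (hT ▸ hiv)
  subst hj
  exact eq_of_heq ((cast_heq _ _).trans (by rfl))

lemma sum_singTup {Y : ι → Type} [∀ i, Fintype (Y i)] {T : Finset ι} {j : ι} (hT : T = {j})
    (f : ((i : {l // l ∈ T}) → Y i.1) → ℝ) :
    ∑ t, f t = ∑ y : Y j, f (singTup hT y) := by
  subst hT
  let e : Y j ≃ ((i : {l // l ∈ ({j} : Finset ι)}) → Y i.1) :=
    { toFun := singTup rfl
      invFun := fun t => t ⟨j, Finset.mem_singleton_self j⟩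
      left_inv := fun y => eq_of_heq (cast_heq _ _)
      right_inv := by
        intro t
        funext i
        obtain ⟨iv, hiv⟩ := i
        have hj : iv = j := Finset.mem_singleton.mp hiv
        subst hj
        exact eq_of_heq (cast_heq _ _) }
  exact (Equiv.sum_comp e f).symm.trans rfl

lemma singTup_apply {Y : ι → Type} {T : Finset ι} {j : ι} (hT : T = {j}) (y : Y j)
    (i : {l // l ∈ T}) (hij : i.1 = j) :
    singTup hT y i = cast (congrArg Y hij.symm) y := by
  obtain ⟨iv, hiv⟩ := i
  subst hij
  rfl

lemma ins_restr {X : ι → Type} {T : Finset ι} {j : ι} (hj : j ∈ T)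
    (x : (i : {l // l ∈ T}) → X i.1) :
    ins hj (x ⟨j, hj⟩) (restr (erase_sub T j) x) = x := by
  funext i
  unfold ins
  split
  · rename_i h
    obtain ⟨iv, hiv⟩ := i
    dsimp only at h
    subst h
    exact eq_of_heq (cast_heq _ _)
  · rfl

end Helpers
section Helpers2

variable {ι : Type} [DecidableEq ι] {X A : ι → Type} [∀ i, Fintype (A i)]

lemma causal_nonempty {S : Finset ι} {P : Corr X A S} (h : IsCausal X A S P) : S.Nonempty := by
  cases h with
  | base k P hP => exact ⟨k, Finset.mem_singleton_self k⟩
  | step S hS P q Pfirst Prest hq hq1 hPfirst hPrest hP =>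
    exact Finset.card_pos.mp (lt_of_lt_of_le (by norm_num) hS)

lemma causal_singleton {T : Finset ι} {j : ι} (hT : T = {j}) (Q : Corr X A T)
    (hQ : ∀ x, IsProbDist (Q x)) : IsCausal X A T Q := by
  subst hT
  exact IsCausal.base j Q hQ

lemma causal_card_one {S : Finset ι} {P : Corr X A S} (h : IsCausal X A S P)
    (hc : S.card ≤ 1) : ∀ x, IsProbDist (P x) := by
  cases h with
  | base k P hP => exact hP
  | step S hS P q Pfirst Prest hq hq1 hPfirst hPrest hP => omega

lemma causal_inv_step {S : Finset ι} {P : Corr X A S} (h : IsCausal X A S P)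
    (hc : 2 ≤ S.card) :
    ∃ (q : {j // j ∈ S} → ℝ)
      (Pfirst : (k : {j // j ∈ S}) → X k.1 → A k.1 → ℝ)
      (Prest : (k : {j // j ∈ S}) → X k.1 → A k.1 → Corr X A (S.erase k.1)),
      (∀ k, 0 ≤ q k) ∧ (∑ k ∈ S.attach, q k = 1) ∧
      (∀ k xk, IsProbDist (Pfirst k xk)) ∧
      (∀ k xk ak, IsCausal X A (S.erase k.1) (Prest k xk ak)) ∧
      (∀ x a, P x a = ∑ k ∈ S.attach, q k * Pfirst k (x k) (a k) *
        Prest k (x k) (a k) (restr (erase_sub S k.1) x) (restr (erase_sub S k.1) a)) := by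
  cases h with
  | base k P hP => simp at hc
  | step S hS P q Pfirst Prest hq hq1 hPfirst hPrest hP =>
    exact ⟨q, Pfirst, Prest, hq, hq1, hPfirst, hPrest, hP⟩

lemma causal_exists_dist {T : Finset ι} {Q : Corr X A T} (h : IsCausal X A T Q)
    {m : ι} (hm : m ∈ T) (xm : X m) : ∃ p : A m → ℝ, IsProbDist p := by
  cases h with
  | base k P hP =>
    have hmk : m = k := Finset.mem_singleton.mp hm
    subst hmk
    -- need inhabitant of input tuples on {m}
    refine ⟨fun am => P (singTup rfl xm) (singTup rfl am), ?_, ?_⟩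
    · intro am; exact (hP _).1 _
    · rw [← sum_singTup rfl (fun t => P (singTup rfl xm) t)]
      exact (hP _).2
  | step S hS P q Pfirst Prest hq hq1 hPfirst hPrest hP =>
    exact ⟨Pfirst ⟨m, hm⟩ xm, hPfirst _ _⟩

lemma sum_attach_erase (S : Finset ι) {k : ι} (hk : k ∈ S) (g : {m // m ∈ S} → ℝ) :
    ∑ m ∈ S.attach, g m
      = g ⟨k, hk⟩ + ∑ l ∈ (S.erase k).attach, g ⟨l.1, erase_sub S k l.2⟩ := by
  rw [← Finset.add_sum_erase _ g (Finset.mem_attach S ⟨k, hk⟩)]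
  congr 1
  refine Finset.sum_bij' (fun m hm => (⟨m.1, ?_⟩ : {l // l ∈ S.erase k}))
    (fun l _ => ⟨l.1, erase_sub S k l.2⟩) ?_ ?_ ?_ ?_ ?_
  · have hne : m ≠ ⟨k, hk⟩ := (Finset.mem_erase.mp hm).1
    exact Finset.mem_erase.mpr ⟨fun hkk => hne (Subtype.ext hkk), m.2⟩
  · intro l hl; exact Finset.mem_attach _ _
  · intro l hl
    refine Finset.mem_erase.mpr ⟨fun hkk => ?_, Finset.mem_attach _ _⟩
    have : l.1 = k := congrArg Subtype.val hkk
    exact (Finset.mem_erase.mp l.2).1 this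
  · intro m hm; rfl
  · intro l hl; rfl
  · intro m hm; rfl

lemma prod_attach_erase (S : Finset ι) {k : ι} (hk : k ∈ S) (g : {m // m ∈ S} → ℝ) :
    ∏ m ∈ S.attach, g m
      = g ⟨k, hk⟩ * ∏ l ∈ (S.erase k).attach, g ⟨l.1, erase_sub S k l.2⟩ := by
  rw [← Finset.mul_prod_erase _ g (Finset.mem_attach S ⟨k, hk⟩)]
  congr 1
  refine Finset.prod_bij' (fun m hm => (⟨m.1, ?_⟩ : {l // l ∈ S.erase k}))
    (fun l _ => ⟨l.1, erase_sub S k l.2⟩) ?_ ?_ ?_ ?_ ?_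
  · have hne : m ≠ ⟨k, hk⟩ := (Finset.mem_erase.mp hm).1
    exact Finset.mem_erase.mpr ⟨fun hkk => hne (Subtype.ext hkk), m.2⟩
  · intro l hl; exact Finset.mem_attach _ _
  · intro l hl
    refine Finset.mem_erase.mpr ⟨fun hkk => ?_, Finset.mem_attach _ _⟩
    have : l.1 = k := congrArg Subtype.val hkk
    exact (Finset.mem_erase.mp l.2).1 this
  · intro m hm; rfl
  · intro l hl; rfl
  · intro m hm; rfl

end Helpers2
section Helpers3

variable {ι : Type} [DecidableEq ι] {X A : ι → Type} [∀ i, Fintype (A i)]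

/-- Product of independent single-party distributions. -/
def prodCorr {S : Finset ι} (D : (m : {j // j ∈ S}) → X m.1 → A m.1 → ℝ) : Corr X A S :=
  fun x a => ∏ m ∈ S.attach, D m (x m) (a m)

lemma prodCorr_causal : ∀ (n : ℕ) (S : Finset ι), S.card = n → S.Nonempty →
    ∀ (D : (m : {j // j ∈ S}) → X m.1 → A m.1 → ℝ),
    (∀ m xm, IsProbDist (D m xm)) → IsCausal X A S (prodCorr D) := by
  intro n
  induction n using Nat.strong_induction_on with
  | _ n IH =>
    intro S hcard hne D hD
    obtain ⟨j, hj⟩ := hne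
    rcases le_or_gt S.card 1 with hc | hc
    · -- singleton case
      have h1 : S.card = 1 := le_antisymm hc (Finset.card_pos.mpr ⟨j, hj⟩)
      have hTj : S = {j} := by
        obtain ⟨c, hcs⟩ := Finset.card_eq_one.mp h1
        subst hcs
        rw [Finset.mem_singleton.mp hj]
      have hE : (S.erase j).attach = ∅ := by
        apply Finset.eq_empty_iff_forall_notMem.mpr
        intro l _
        have hme : S.erase j = ∅ := by rw [hTj]; exact Finset.erase_singleton j
        exact Finset.eq_empty_iff_forall_notMem.mp hme _ l.2
      apply causal_singleton hTj
      intro x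
      constructor
      · intro a
        apply Finset.prod_nonneg
        intro m _
        exact (hD m (x m)).1 _
      · rw [sum_singTup hTj (fun t => prodCorr D x t)]
        have hval : ∀ y : A j,
            prodCorr D x (singTup hTj y) = D ⟨j, hj⟩ (x ⟨j, hj⟩) y := by
          intro y
          unfold prodCorr
          rw [prod_attach_erase S hj, hE, Finset.prod_empty, mul_one]
          exact congrArg _ (eq_of_heq (cast_heq _ _))
        rw [Finset.sum_congr rfl (fun y _ => hval y)]
        exact (hD ⟨j, hj⟩ (x ⟨j, hj⟩)).2
    · -- at least two parties
      refine IsCausal.step S hc (prodCorr D)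
        (fun m => if m = ⟨j, hj⟩ then 1 else 0)
        (fun m => D m)
        (fun m xm am => prodCorr (fun l => D ⟨l.1, erase_sub S m.1 l.2⟩))
        ?_ ?_ ?_ ?_ ?_
      · intro m; beta_reduce; split <;> norm_num
      · rw [Finset.sum_ite_eq' S.attach ⟨j, hj⟩ (fun _ => (1 : ℝ))]
        simp [Finset.mem_attach]
      · exact hD
      · intro m xm am
        have hmem := m.2
        have hcard' : (S.erase m.1).card = n - 1 := by
          rw [Finset.card_erase_of_mem hmem, hcard]
        refine IH (n - 1) (by omega) _ hcard' ?_ _ (fun l xl => hD ⟨l.1, erase_sub S m.1 l.2⟩ xl)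
        rw [← Finset.card_pos, hcard']
        omega
      · intro x a
        rw [Finset.sum_eq_single_of_mem ⟨j, hj⟩ (Finset.mem_attach _ _)
          (fun m _ hmj => by beta_reduce; rw [if_neg hmj, zero_mul, zero_mul])]
        dsimp only
        rw [if_pos rfl, one_mul]
        show prodCorr D x a = _ * prodCorr _ _ _
        unfold prodCorr
        rw [prod_attach_erase S hj]
        rfl

end Helpers3
section Helpers4

variable {ι : Type} [DecidableEq ι] {X A : ι → Type} [∀ i, Fintype (A i)]

lemma causal_convex : ∀ (n : ℕ) (S : Finset ι), S.card = n →
    ∀ {M : Type} [Fintype M] [Nonempty M] (w : M → ℝ) (Pm : M → Corr X A S),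
    (∀ m, 0 ≤ w m) → (∑ m, w m = 1) → (∀ m, IsCausal X A S (Pm m)) →
    IsCausal X A S (fun x a => ∑ m, w m * Pm m x a) := by
  intro n
  induction n using Nat.strong_induction_on with
  | _ n IH =>
    intro S hcard M instF instN w Pm hw hw1 hC
    have m0 : M := Classical.arbitrary M
    rcases le_or_gt S.card 1 with hc | hc
    · -- singleton case
      obtain ⟨j, hj⟩ := causal_nonempty (hC m0)
      have h1 : S.card = 1 := le_antisymm hc (Finset.card_pos.mpr ⟨j, hj⟩)
      have hTj : S = {j} := by
        obtain ⟨c, hcs⟩ := Finset.card_eq_one.mp h1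
        subst hcs
        rw [Finset.mem_singleton.mp hj]
      apply causal_singleton hTj
      intro x
      constructor
      · intro a
        apply Finset.sum_nonneg
        intro m _
        exact mul_nonneg (hw m) ((causal_card_one (hC m) (le_of_eq h1) x).1 a)
      · rw [Finset.sum_comm]
        rw [Finset.sum_congr rfl (fun m _ => ?_)]
        · exact hw1
        · rw [← Finset.mul_sum, (causal_card_one (hC m) (le_of_eq h1) x).2, mul_one]
    · -- at least two parties
      have hc2 : 2 ≤ S.card := hc
      choose qq F R hq hq1 hF hR heq using fun m => causal_inv_step (hC m) hc2
      set c : (j : {l // l ∈ S}) → X j.1 → A j.1 → ℝ :=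
        fun j xj aj => ∑ m, w m * qq m j * F m j xj aj with hc_def
      set s : {l // l ∈ S} → ℝ := fun j => ∑ m, w m * qq m j with hs_def
      have hsnn : ∀ j, 0 ≤ s j :=
        fun j => Finset.sum_nonneg fun m _ => mul_nonneg (hw m) (hq m j)
      have htermnn : ∀ j xj aj m, 0 ≤ w m * qq m j * F m j xj aj :=
        fun j xj aj m => mul_nonneg (mul_nonneg (hw m) (hq m j)) ((hF m j xj).1 aj)
      have hcnn : ∀ j xj aj, 0 ≤ c j xj aj :=
        fun j xj aj => Finset.sum_nonneg fun m _ => htermnn j xj aj m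
      have hczero : ∀ j xj aj, c j xj aj = 0 → ∀ m, w m * qq m j * F m j xj aj = 0 := by
        intro j xj aj h m
        exact (Finset.sum_eq_zero_iff_of_nonneg (fun m _ => htermnn j xj aj m)).mp h m
          (Finset.mem_univ m)
      have hszero : ∀ j, s j = 0 → ∀ m, w m * qq m j = 0 := by
        intro j h m
        exact (Finset.sum_eq_zero_iff_of_nonneg
          (fun m _ => mul_nonneg (hw m) (hq m j))).mp h m (Finset.mem_univ m)
      set G : (j : {l // l ∈ S}) → X j.1 → A j.1 → ℝ :=
        fun j xj aj => if s j = 0 then F m0 j xj aj else c j xj aj / s j with hG_def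
      set R' : (j : {l // l ∈ S}) → X j.1 → A j.1 → Corr X A (S.erase j.1) :=
        fun j xj aj => if h : c j xj aj = 0 then R m0 j xj aj
          else fun u b => ∑ m, (w m * qq m j * F m j xj aj / c j xj aj) * R m j xj aj u b
        with hR'_def
      have hkey : ∀ j xj aj, s j * G j xj aj = c j xj aj := by
        intro j xj aj
        by_cases h : s j = 0
        · rw [hG_def]
          dsimp only
          rw [if_pos h, h, zero_mul]
          symm
          exact Finset.sum_eq_zero fun m _ => by rw [hszero j h m, zero_mul]
        · rw [hG_def]
          dsimp only
          rw [if_neg h, mul_div_cancel₀ _ h]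
      refine IsCausal.step S hc2 _ s G R' hsnn ?_ ?_ ?_ ?_
      · -- weights sum to 1
        rw [hs_def]
        dsimp only
        rw [Finset.sum_comm]
        rw [Finset.sum_congr rfl (fun m _ => ?_)]
        · exact hw1
        · rw [← Finset.mul_sum, hq1 m, mul_one]
      · -- G is a probability distribution
        intro j xj
        rw [hG_def]
        dsimp only
        by_cases h : s j = 0
        · simp only [if_pos h]
          exact hF m0 j xj
        · constructor
          · intro aj
            simp only [if_neg h]
            exact div_nonneg (hcnn j xj aj) (hsnn j)
          · simp only [if_neg h]
            rw [← Finset.sum_div]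
            have : ∑ aj, c j xj aj = s j := by
              rw [hc_def]
              dsimp only
              rw [Finset.sum_comm]
              exact Finset.sum_congr rfl fun m _ => by
                rw [← Finset.mul_sum, (hF m j xj).2, mul_one]
            rw [this, div_self h]
      · -- R' is causal
        intro j xj aj
        rw [hR'_def]
        dsimp only
        by_cases h : c j xj aj = 0
        · erw [dif_pos h]
          exact hR m0 j xj aj
        · erw [dif_neg h]
          have hcard' : (S.erase j.1).card = n - 1 := by
            rw [Finset.card_erase_of_mem j.2, hcard]
          refine IH (n - 1) (by omega) _ hcard'
            (fun m => w m * qq m j * F m j xj aj / c j xj aj)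
            (fun m => R m j xj aj)
            (fun m => div_nonneg (htermnn j xj aj m) (hcnn j xj aj))
            ?_ (fun m => hR m j xj aj)
          rw [← Finset.sum_div, div_self h]
      · -- the decomposition identity
        intro x a
        rw [Finset.sum_congr rfl (fun m _ => by rw [heq m x a, Finset.mul_sum])]
        rw [Finset.sum_comm]
        refine Finset.sum_congr rfl fun j _ => ?_
        have hre : ∀ m, w m * (qq m j * F m j (x j) (a j) *
            R m j (x j) (a j) (restr (erase_sub S j.1) x) (restr (erase_sub S j.1) a))
            = (w m * qq m j * F m j (x j) (a j)) *
            R m j (x j) (a j) (restr (erase_sub S j.1) x) (restr (erase_sub S j.1) a) := by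
          intro m; ring
        rw [Finset.sum_congr rfl (fun m _ => hre m)]
        by_cases h : c j (x j) (a j) = 0
        · rw [Finset.sum_eq_zero (fun m _ => by rw [hczero j _ _ h m, zero_mul])]
          rw [hkey j (x j) (a j), h, zero_mul]
        · rw [hkey j (x j) (a j)]
          rw [hR'_def]
          dsimp only
          erw [dif_neg h, Finset.mul_sum]
          refine Finset.sum_congr rfl fun m _ => ?_
          rw [← mul_assoc, mul_div_assoc', mul_div_cancel_left₀ _ h]
  
end Helpers4
section Helpers5

variable {ι : Type} [DecidableEq ι] {X A : ι → Type} [∀ i, Fintype (A i)]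

def reFin {Y : ι → Type} {T1 T2 : Finset ι} (h : T1 = T2)
    (u : (i : {l // l ∈ T1}) → Y i.1) : (i : {l // l ∈ T2}) → Y i.1 :=
  fun i => u ⟨i.1, h.symm ▸ i.2⟩

lemma causal_reindex {T1 T2 : Finset ι} (h : T1 = T2) {Q : Corr X A T1}
    (hQ : IsCausal X A T1 Q) :
    IsCausal X A T2 (fun u b => Q (reFin h.symm u) (reFin h.symm b)) := by
  subst h
  exact hQ

lemma prod_last : ∀ (n : ℕ) (S : Finset ι), S.card = n → 2 ≤ S.card →
    ∀ (k : ι) (hk : k ∈ S)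
      (Q : Corr X A (S.erase k))
      (L : ((i : {l // l ∈ S.erase k}) → X i.1) → ((i : {l // l ∈ S.erase k}) → A i.1) →
        X k → A k → ℝ)
      (D : (m : {l // l ∈ S}) → X m.1 → A m.1 → ℝ),
      IsCausal X A (S.erase k) Q →
      (∀ u b xk, IsProbDist (L u b xk)) →
      (∀ m xm, IsProbDist (D m xm)) →
      IsCausal X A S (fun x a =>
        Q (restr (erase_sub S k) x) (restr (erase_sub S k) a) *
        L (restr (erase_sub S k) x) (restr (erase_sub S k) a) (x ⟨k, hk⟩) (a ⟨k, hk⟩)) := by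
  intro n
  induction n using Nat.strong_induction_on with
  | _ n IH =>
    intro S hcard hS2 k hk Q L D hQ hL hD
    have hTcard : (S.erase k).card = n - 1 := by
      rw [Finset.card_erase_of_mem hk, hcard]
    rcases le_or_gt (S.erase k).card 1 with hc | hc
    · -- the other parties form a singleton {j}
      have hT1 : (S.erase k).card = 1 := by omega
      obtain ⟨j, hTj⟩ := Finset.card_eq_one.mp hT1
      have hjT : j ∈ S.erase k := hTj ▸ Finset.mem_singleton_self j
      have hjS : j ∈ S := erase_sub S k hjT
      have hjk : j ≠ k := (Finset.mem_erase.mp hjT).1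
      have hQp : ∀ u, IsProbDist (Q u) := causal_card_one hQ (le_of_eq hT1)
      have hcS : S.card = 2 := by omega
      have hSj : S.erase j = {k} := by
        have hkj : k ∈ S.erase j := Finset.mem_erase.mpr ⟨Ne.symm hjk, hk⟩
        have hce : (S.erase j).card = 1 := by
          rw [Finset.card_erase_of_mem hjS, hcS]
        obtain ⟨c, hcc⟩ := Finset.card_eq_one.mp hce
        have hck : c = k := (Finset.mem_singleton.mp (hcc ▸ hkj)).symm
        rw [hcc, hck]
      refine IsCausal.step S hS2 _
        (fun m => if m.1 = j then (1 : ℝ) else 0)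
        (fun m xm am => if h : m.1 = j then
            Q (singTup hTj (cast (congrArg X h) xm)) (singTup hTj (cast (congrArg A h) am))
          else D m xm am)
        (fun m xm am => if h : m.1 = j then
            (fun u b =>
              L (singTup hTj (cast (congrArg X h) xm)) (singTup hTj (cast (congrArg A h) am))
                (u ⟨k, by rw [h]; exact Finset.mem_erase.mpr ⟨Ne.symm hjk, hk⟩⟩)
                (b ⟨k, by rw [h]; exact Finset.mem_erase.mpr ⟨Ne.symm hjk, hk⟩⟩))
          else prodCorr (fun l => D ⟨l.1, erase_sub S m.1 l.2⟩))
        ?_ ?_ ?_ ?_ ?_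
      · intro m; beta_reduce; split <;> norm_num
      · rw [Finset.sum_attach S (fun i => if i = j then (1 : ℝ) else 0),
          Finset.sum_ite_eq' S j (fun _ => (1 : ℝ)), if_pos hjS]
      · intro m xm
        beta_reduce
        split
        · rename_i h
          obtain ⟨mv, hm⟩ := m
          dsimp only at h xm ⊢
          subst h
          constructor
          · intro am
            exact (hQp _).1 _
          · have := (hQp (singTup hTj (cast (congrArg X rfl) xm))).2
            rw [sum_singTup hTj] at this
            exact this
        · exact hD m xm
      · intro m xm am
        beta_reduce
        by_cases h : m.1 = j
        · erw [dif_pos h]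
          apply causal_singleton (show S.erase m.1 = {k} by rw [h]; exact hSj)
          intro u
          constructor
          · intro b
            exact (hL _ _ _).1 _
          · rw [sum_singTup (show S.erase m.1 = {k} by rw [h]; exact hSj)]
            exact (hL _ _ _).2
        · erw [dif_neg h]
          refine prodCorr_causal ((S.erase m.1).card) _ rfl
            ⟨j, Finset.mem_erase.mpr ⟨fun he => h he.symm, hjS⟩⟩ _
            (fun l xl => hD ⟨l.1, erase_sub S m.1 l.2⟩ xl)
      · intro x a
        rw [Finset.sum_eq_single_of_mem ⟨j, hjS⟩ (Finset.mem_attach _ _)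
          (fun m _ hm => by
            beta_reduce
            rw [if_neg (fun he => hm (Subtype.ext he)), zero_mul, zero_mul])]
        dsimp only
        erw [if_pos rfl, dif_pos rfl, dif_pos rfl, one_mul]
        show Q (restr (erase_sub S k) x) (restr (erase_sub S k) a) *
            L (restr (erase_sub S k) x) (restr (erase_sub S k) a) (x ⟨k, hk⟩) (a ⟨k, hk⟩)
          = Q (singTup hTj (x ⟨j, hjS⟩)) (singTup hTj (a ⟨j, hjS⟩)) *
            (L (singTup hTj (x ⟨j, hjS⟩)) (singTup hTj (a ⟨j, hjS⟩)) (x ⟨k, hk⟩) (a ⟨k, hk⟩))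
        rw [singTup_restr hTj (erase_sub S k) x hjS, singTup_restr hTj (erase_sub S k) a hjS]
    · -- the other parties have at least two members
      obtain ⟨r, F, R, hr, hr1, hF, hR, hQeq⟩ := causal_inv_step hQ hc
      refine IsCausal.step S hS2 _
        (fun m => if h : m.1 ∈ S.erase k then r ⟨m.1, h⟩ else 0)
        (fun m xm am => if h : m.1 ∈ S.erase k then F ⟨m.1, h⟩ xm am else D m xm am)
        (fun m xm am => if h : m.1 ∈ S.erase k then
            (fun u b =>
              R ⟨m.1, h⟩ xm am
                (reFin Finset.erase_right_comm (restr (erase_sub (S.erase m.1) k) u))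
                (reFin Finset.erase_right_comm (restr (erase_sub (S.erase m.1) k) b)) *
              L (ins h xm (reFin Finset.erase_right_comm (restr (erase_sub (S.erase m.1) k) u)))
                (ins h am (reFin Finset.erase_right_comm (restr (erase_sub (S.erase m.1) k) b)))
                (u ⟨k, Finset.mem_erase.mpr ⟨Ne.symm (Finset.mem_erase.mp h).1, hk⟩⟩)
                (b ⟨k, Finset.mem_erase.mpr ⟨Ne.symm (Finset.mem_erase.mp h).1, hk⟩⟩))
          else prodCorr (fun l => D ⟨l.1, erase_sub S m.1 l.2⟩))
        ?_ ?_ ?_ ?_ ?_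
      · intro m; beta_reduce; split
        · exact hr _
        · exact le_refl 0
      · rw [sum_attach_erase S hk]
        dsimp only
        rw [dif_neg (Finset.notMem_erase k S), zero_add]
        rw [Finset.sum_congr rfl (fun l _ => dif_pos l.2)]
        exact hr1
      · intro m xm
        beta_reduce
        split
        · rename_i h; exact hF ⟨m.1, h⟩ xm
        · exact hD m xm
      · intro m xm am
        beta_reduce
        by_cases h : m.1 ∈ S.erase k
        · erw [dif_pos h]
          have hkm : k ∈ S.erase m.1 :=
            Finset.mem_erase.mpr ⟨Ne.symm (Finset.mem_erase.mp h).1, hk⟩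
          have hcard' : (S.erase m.1).card = n - 1 := by
            rw [Finset.card_erase_of_mem m.2, hcard]
          have hc2' : 2 ≤ (S.erase m.1).card := by omega
          exact IH (n - 1) (by omega) (S.erase m.1) hcard' hc2' k hkm
            (fun w c => R ⟨m.1, h⟩ xm am
              (reFin Finset.erase_right_comm w) (reFin Finset.erase_right_comm c))
            (fun w c xk ak =>
              L (ins h xm (reFin Finset.erase_right_comm w))
                (ins h am (reFin Finset.erase_right_comm c)) xk ak)
            (fun l => D ⟨l.1, erase_sub S m.1 l.2⟩)
            (causal_reindex Finset.erase_right_comm.symm (hR ⟨m.1, h⟩ xm am))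
            (fun w c xk => hL _ _ xk)
            (fun l xl => hD ⟨l.1, erase_sub S m.1 l.2⟩ xl)
        · erw [dif_neg h]
          have hmk : m.1 = k := by
            by_contra hmk
            exact h (Finset.mem_erase.mpr ⟨hmk, m.2⟩)
          refine prodCorr_causal ((S.erase m.1).card) _ rfl ?_ _
            (fun l xl => hD ⟨l.1, erase_sub S m.1 l.2⟩ xl)
          have : 1 ≤ (S.erase m.1).card := by
            rw [Finset.card_erase_of_mem m.2]
            omega
          exact Finset.card_pos.mp this
      · intro x a
        rw [sum_attach_erase S hk]
        dsimp only
        rw [dif_neg (Finset.notMem_erase k S), zero_mul, zero_mul, zero_add]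
        rw [hQeq (restr (erase_sub S k) x) (restr (erase_sub S k) a), Finset.sum_mul]
        refine Finset.sum_congr rfl fun l _ => ?_
        erw [dif_pos l.2, dif_pos l.2, dif_pos l.2]
        show r l * F l (restr (erase_sub S k) x l) (restr (erase_sub S k) a l) *
            R l (restr (erase_sub S k) x l) (restr (erase_sub S k) a l)
              (restr (erase_sub (S.erase k) l.1) (restr (erase_sub S k) x))
              (restr (erase_sub (S.erase k) l.1) (restr (erase_sub S k) a)) *
            L (restr (erase_sub S k) x) (restr (erase_sub S k) a) (x ⟨k, hk⟩) (a ⟨k, hk⟩)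
          = r l * F l (restr (erase_sub S k) x l) (restr (erase_sub S k) a l) *
            (R l (restr (erase_sub S k) x l) (restr (erase_sub S k) a l)
              (restr (erase_sub (S.erase k) l.1) (restr (erase_sub S k) x))
              (restr (erase_sub (S.erase k) l.1) (restr (erase_sub S k) a)) *
            L (ins l.2 (restr (erase_sub S k) x ⟨l.1, l.2⟩)
                (restr (erase_sub (S.erase k) l.1) (restr (erase_sub S k) x)))
              (ins l.2 (restr (erase_sub S k) a ⟨l.1, l.2⟩)
                (restr (erase_sub (S.erase k) l.1) (restr (erase_sub S k) a)))
              (x ⟨k, hk⟩) (a ⟨k, hk⟩))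
        rw [ins_restr l.2 (restr (erase_sub S k) x), ins_restr l.2 (restr (erase_sub S k) a)]
        ring

end Helpers5

/-- any correlation of the 'some party acts last' form—a convex combination,
over parties `k`, of products of a causal correlation for the other parties with single-party
distributions for `k` that may depend on the other parties' inputs and outputs—is causal. -/
theorem party_last_form_isCausal {ι : Type} [DecidableEq ι]
    (X A : ι → Type) [∀ i, Fintype (A i)] (S : Finset ι) (hS : 2 ≤ S.card)
    (P : Corr X A S)
    (q : {j // j ∈ S} → ℝ)
    (PNk : (k : {j // j ∈ S}) → Corr X A (S.erase k.1))
    (Plast : (k : {j // j ∈ S}) → ((i : {j // j ∈ S.erase k.1}) → X i.1) →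
      ((i : {j // j ∈ S.erase k.1}) → A i.1) → X k.1 → A k.1 → ℝ)
    (hq : ∀ k, 0 ≤ q k) (hq1 : ∑ k ∈ S.attach, q k = 1)
    (hPNk : ∀ k, IsCausal X A (S.erase k.1) (PNk k))
    (hPlast : ∀ k u b xk, IsProbDist (Plast k u b xk))
    (hP : ∀ x a, P x a = ∑ k ∈ S.attach, q k *
      PNk k (restr (erase_sub S k.1) x) (restr (erase_sub S k.1) a) *
      Plast k (restr (erase_sub S k.1) x) (restr (erase_sub S k.1) a) (x k) (a k)) :
    IsCausal X A S P := by
  classical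
  -- dummy single-party distributions for every party, extracted from the hypotheses
  have hdum : ∀ (m : {j // j ∈ S}) (xm : X m.1), ∃ p : A m.1 → ℝ, IsProbDist p := by
    intro m xm
    obtain ⟨b, hbS, hbm⟩ := Finset.exists_mem_ne (show 1 < S.card by omega) m.1
    have hmb : m.1 ∈ S.erase b := Finset.mem_erase.mpr ⟨fun h => hbm h.symm, m.2⟩
    exact causal_exists_dist (hPNk ⟨b, hbS⟩) hmb xm
  choose D hDp using hdum
  have hne : Nonempty {j // j ∈ S} := by
    have h0 : 0 < S.card := by omega
    obtain ⟨j, hj⟩ := Finset.card_pos.mp h0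
    exact ⟨⟨j, hj⟩⟩
  have hattach : S.attach = (Finset.univ : Finset {j // j ∈ S}) := by
    ext m; simp [Finset.mem_attach]
  -- each `k acts last` term is causal
  have hterm : ∀ kk : {j // j ∈ S}, IsCausal X A S (fun x a =>
      PNk kk (restr (erase_sub S kk.1) x) (restr (erase_sub S kk.1) a) *
      Plast kk (restr (erase_sub S kk.1) x) (restr (erase_sub S kk.1) a) (x kk) (a kk)) :=
    fun kk =>
      prod_last S.card S rfl hS kk.1 kk.2 (PNk kk) (Plast kk) D (hPNk kk) (hPlast kk) hDp
  have hmain := causal_convex S.card S rfl q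
    (fun kk => fun x a =>
      PNk kk (restr (erase_sub S kk.1) x) (restr (erase_sub S kk.1) a) *
      Plast kk (restr (erase_sub S kk.1) x) (restr (erase_sub S kk.1) a) (x kk) (a kk))
    hq (by rw [← hattach]; exact hq1) hterm
  have hPfun : P = fun x a => ∑ kk : {j // j ∈ S}, q kk *
      (PNk kk (restr (erase_sub S kk.1) x) (restr (erase_sub S kk.1) a) *
      Plast kk (restr (erase_sub S kk.1) x) (restr (erase_sub S kk.1) a) (x kk) (a kk)) := by
    funext x a
    rw [hP x a, ← hattach]
    exact Finset.sum_congr rfl fun kk _ => by ring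
  rw [hPfun]
  exact hmain
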